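/- Let Φ_F = {±e_i : 1 ≤ i ≤ 4} ∪ {±e_i ± e_j : 1 ≤ i < j ≤ 4} ∪ {(±1/2, ±1/2, ±1/2, ±1/2)} be the set of roots of type F_4 in ℝ^4, with dual lattice M = {a ∈ ℤ^4 : a_1 + a_2 + a_3 + a_4 is even}. Let F = {u ∈ ℝ^4 : −1 ≤ ⟨u, v⟩ ≤ 1 for all v ∈ Φ_F}. Then for every integer q ≥ 2, the topological interior of F does NOT contain representatives of every equivalence class in (1/q)M / M: there exists w ∈ (1/q)M such that every u ∈ (1/q)M with u − w ∈ M satisfies |⟨u, v⟩| ≥ 1 for some v ∈ Φ_F. (Consequently, a lattice polytope cut out by F_4 whose facet normals are exactly the rays spanned by the roots is not diagonally split for any q.) -/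
import Mathlib


open Finset

/-- The `i`-th standard basis vector of `ℝ^n`. -/
noncomputable def stdBasis (n : ℕ) (i : Fin n) : Fin n → ℝ := fun j => if j = i then 1 else 0

/-- The standard inner product on `ℝ^n`. -/
noncomputable def innerProd {n : ℕ} (u v : Fin n → ℝ) : ℝ := ∑ i, u i * v i

/-- The roots of type `F_4`: `±e_i`, `±e_i ± e_j` for `i < j`, and `(±1/2, ±1/2, ±1/2, ±1/2)`. -/
noncomputable def typeF : Set (Fin 4 → ℝ) :=
  {v | ∃ i, v = stdBasis 4 i ∨ v = -stdBasis 4 i} ∪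
  {v | ∃ i j, i < j ∧ ∃ ε δ : ℝ, (ε = 1 ∨ ε = -1) ∧ (δ = 1 ∨ δ = -1) ∧
    v = ε • stdBasis 4 i + δ • stdBasis 4 j} ∪
  {v | ∀ i, v i = 1/2 ∨ v i = -1/2}

/-- The dual lattice of the `F_4` root lattice: integer vectors with even coordinate sum. -/
def evenLattice : Set (Fin 4 → ℝ) :=
  {a | (∀ i, ∃ m : ℤ, a i = m) ∧ ∃ m : ℤ, ∑ i, a i = 2 * m}

lemma inner_std (u : Fin 4 → ℝ) (i : Fin 4) : innerProd u (stdBasis 4 i) = u i := by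
  simp [innerProd, stdBasis, mul_ite]

lemma inner_pair (u : Fin 4 → ℝ) (i j : Fin 4) (ε δ : ℝ) :
    innerProd u (ε • stdBasis 4 i + δ • stdBasis 4 j) = ε * u i + δ * u j := by
  simp [innerProd, stdBasis, mul_add, Finset.sum_add_distrib, mul_ite, mul_comm]

lemma std_mem_typeF (i : Fin 4) : stdBasis 4 i ∈ typeF :=
  Or.inl (Or.inl ⟨i, Or.inl rfl⟩)

lemma pair_mem_typeF (i j : Fin 4) (hij : i < j) (ε δ : ℝ)
    (hε : ε = 1 ∨ ε = -1) (hδ : δ = 1 ∨ δ = -1) :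
    ε • stdBasis 4 i + δ • stdBasis 4 j ∈ typeF :=
  Or.inl (Or.inr ⟨i, j, hij, ε, δ, hε, hδ, rfl⟩)

lemma one_le_abs_of_int {x : ℝ} (m : ℤ) (h : x = m) (h0 : x ≠ 0) : 1 ≤ |x| := by
  subst h
  have hm : m ≠ 0 := by exact_mod_cast h0
  have := Int.one_le_abs hm
  calc (1:ℝ) ≤ |(m:ℤ)| := by exact_mod_cast this
    _ = |(m:ℝ)| := by push_cast [Int.cast_abs]; rfl

/-- For each `q ≥ 2`, the interior of the diagonal splitting polytope
`F = {u | -1 ≤ ⟨u,v⟩ ≤ 1 for all v ∈ F_4}` does not contain representatives of every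
class of `(1/q)M / M`, where `M` is the dual of the `F_4` root lattice: some class
`w + M` meets the interior of `F` in no point, i.e. every representative `u` pairs with
some root with absolute value at least `1`. -/
theorem typeF_not_diagonally_split (q : ℤ) (hq : 2 ≤ q) :
    ∃ w : Fin 4 → ℝ, (q : ℝ) • w ∈ evenLattice ∧
      ∀ u : Fin 4 → ℝ, (q : ℝ) • u ∈ evenLattice → u - w ∈ evenLattice →
        ∃ v ∈ typeF, 1 ≤ |innerProd u v| := by
  have hq0 : (q:ℝ) ≠ 0 := by positivity
  have hq2 : (2:ℝ) ≤ (q:ℝ) := by exact_mod_cast hq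
  have hinv_pos : 0 < (q:ℝ)⁻¹ := by positivity
  have hinv_le : (q:ℝ)⁻¹ ≤ 1/2 := by
    rw [inv_le_comm₀ (by linarith) (by norm_num)]
    linarith
  rcases Int.even_or_odd q with ⟨t, ht⟩ | ⟨t, ht⟩
  · -- q even : use w = e₀
    refine ⟨stdBasis 4 0, ⟨?_, ?_⟩, ?_⟩
    · intro i
      by_cases h : i = 0
      · exact ⟨q, by simp [h, stdBasis]⟩
      · exact ⟨0, by simp [stdBasis, h]⟩
    · refine ⟨t, ?_⟩
      have : ∑ i, ((q:ℝ) • stdBasis 4 0) i = (q:ℝ) := by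
        simp [stdBasis, Fin.sum_univ_four]
      rw [this, ht]; push_cast; ring
    · intro u _ hu
      obtain ⟨hint, k, hk⟩ := hu
      choose m hm using hint
      have h0 : u 0 = (m 0 + 1 : ℤ) := by
        have := hm 0; simp [stdBasis] at this; push_cast; linarith
      have h1 : u 1 = (m 1 : ℤ) := by
        have := hm 1; simp [stdBasis] at this; linarith
      have h2 : u 2 = (m 2 : ℤ) := by
        have := hm 2; simp [stdBasis] at this; linarith
      have h3 : u 3 = (m 3 : ℤ) := by
        have := hm 3; simp [stdBasis] at this; linarith
      have hksum : m 0 + m 1 + m 2 + m 3 = 2 * k := by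
        have hk' : ∑ i, (u i - stdBasis 4 0 i) = 2 * (k:ℝ) := hk
        rw [Fin.sum_univ_four] at hk'
        simp [stdBasis] at hk'
        rw [h0, h1, h2, h3] at hk'
        have hcast : ((m 0 + m 1 + m 2 + m 3 : ℤ):ℝ) = ((2*k : ℤ):ℝ) := by
          push_cast; push_cast at hk'; linarith
        exact_mod_cast hcast
      have : m 0 + 1 ≠ 0 ∨ m 1 ≠ 0 ∨ m 2 ≠ 0 ∨ m 3 ≠ 0 := by omega
      rcases this with h | h | h | h
      · exact ⟨stdBasis 4 0, std_mem_typeF 0,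
          one_le_abs_of_int (m 0 + 1) (by rw [inner_std]; exact h0)
            (by rw [inner_std, h0]; exact_mod_cast h)⟩
      · exact ⟨stdBasis 4 1, std_mem_typeF 1,
          one_le_abs_of_int (m 1) (by rw [inner_std]; exact h1)
            (by rw [inner_std, h1]; exact_mod_cast h)⟩
      · exact ⟨stdBasis 4 2, std_mem_typeF 2,
          one_le_abs_of_int (m 2) (by rw [inner_std]; exact h2)
            (by rw [inner_std, h2]; exact_mod_cast h)⟩
      · exact ⟨stdBasis 4 3, std_mem_typeF 3,
          one_le_abs_of_int (m 3) (by rw [inner_std]; exact h3)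
            (by rw [inner_std, h3]; exact_mod_cast h)⟩
  · -- q odd : use w = (1, 1/q, 1/q, 1/q)
    set w : Fin 4 → ℝ := fun i => if i = 0 then 1 else (q:ℝ)⁻¹ with hw
    refine ⟨w, ⟨?_, ?_⟩, ?_⟩
    · intro i
      by_cases h : i = 0
      · exact ⟨q, by simp [hw, h]⟩
      · exact ⟨1, by simp [hw, h, hq0]⟩
    · refine ⟨t + 2, ?_⟩
      rw [Fin.sum_univ_four]
      simp only [Pi.smul_apply, smul_eq_mul, hw]
      norm_num [mul_inv_cancel₀ hq0]
      rw [ht]; push_cast; ring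
    · intro u _ hu
      obtain ⟨hint, k, hk⟩ := hu
      choose m hm using hint
      have h0 : u 0 = (m 0 + 1 : ℤ) := by
        have := hm 0; simp [hw] at this; push_cast; linarith
      have h1 : u 1 = (q:ℝ)⁻¹ + (m 1 : ℤ) := by
        have := hm 1; simp [hw] at this; linarith
      have h2 : u 2 = (q:ℝ)⁻¹ + (m 2 : ℤ) := by
        have := hm 2; simp [hw] at this; linarith
      have h3 : u 3 = (q:ℝ)⁻¹ + (m 3 : ℤ) := by
        have := hm 3; simp [hw] at this; linarith
      have hksum : m 0 + m 1 + m 2 + m 3 = 2 * k := by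
        have hk' : ∑ i, (u i - w i) = 2 * (k:ℝ) := hk
        rw [Fin.sum_univ_four, h0, h1, h2, h3] at hk'
        simp only [hw] at hk'
        norm_num at hk'
        have hcast : ((m 0 + m 1 + m 2 + m 3 : ℤ):ℝ) = ((2*k : ℤ):ℝ) := by
          push_cast; push_cast at hk'; linarith
        exact_mod_cast hcast
      -- if u 0 ≠ 0 we are done
      by_cases hu0 : u 0 = 0
      swap
      · exact ⟨stdBasis 4 0, std_mem_typeF 0,
          one_le_abs_of_int (m 0 + 1) (by rw [inner_std]; exact h0)
            (by rw [inner_std]; exact hu0)⟩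
      have hm0 : m 0 = -1 := by
        have : ((m 0 + 1 : ℤ) : ℝ) = 0 := by rw [← h0]; exact hu0
        have : (m 0 + 1 : ℤ) = 0 := by exact_mod_cast this
        omega
      -- if any of |u 1|, |u 2|, |u 3| ≥ 1 we are done
      by_cases hb1 : 1 ≤ |u 1|
      · exact ⟨stdBasis 4 1, std_mem_typeF 1, by rwa [inner_std]⟩
      by_cases hb2 : 1 ≤ |u 2|
      · exact ⟨stdBasis 4 2, std_mem_typeF 2, by rwa [inner_std]⟩
      by_cases hb3 : 1 ≤ |u 3|
      · exact ⟨stdBasis 4 3, std_mem_typeF 3, by rwa [inner_std]⟩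
      push_neg at hb1 hb2 hb3
      -- each m i for i = 1,2,3 is 0 or -1
      have key : ∀ i : Fin 4, u i = (q:ℝ)⁻¹ + (m i : ℤ) → |u i| < 1 → m i = 0 ∨ m i = -1 := by
        intro i hi hbi
        rw [abs_lt] at hbi
        obtain ⟨hl, hr⟩ := hbi
        rw [hi] at hl hr
        have hlt : ((m i : ℤ) : ℝ) < 1 := by linarith
        have hgt : (-2 : ℝ) < ((m i : ℤ) : ℝ) := by linarith
        have hlt' : m i < 1 := by exact_mod_cast hlt
        have hgt' : (-2 : ℤ) < m i := by exact_mod_cast hgt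
        omega
      have k1 := key 1 h1 hb1
      have k2 := key 2 h2 hb2
      have k3 := key 3 h3 hb3
      -- helper for the "difference-1" roots
      have diff_case : ∀ i j : Fin 4, i < j → ∀ ε δ : ℝ, (ε = 1 ∨ ε = -1) →
          (δ = 1 ∨ δ = -1) → ε * u i + δ * u j = 1 →
          ∃ v ∈ typeF, 1 ≤ |innerProd u v| := by
        intro i j hij ε δ hε hδ hval
        exact ⟨ε • stdBasis 4 i + δ • stdBasis 4 j, pair_mem_typeF i j hij ε δ hε hδ,
          by rw [inner_pair, hval]; norm_num⟩
      rcases k1 with k1 | k1 <;> rcases k2 with k2 | k2 <;> rcases k3 with k3 | k3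
      · omega
      · -- (0,0,-1): u 1 - u 3 = 1
        exact diff_case 1 3 (by decide) 1 (-1) (Or.inl rfl) (Or.inr rfl)
          (by rw [h1, h3, k1, k3]; push_cast; ring)
      · -- (0,-1,0): u 1 - u 2 = 1
        exact diff_case 1 2 (by decide) 1 (-1) (Or.inl rfl) (Or.inr rfl)
          (by rw [h1, h2, k1, k2]; push_cast; ring)
      · omega
      · -- (-1,0,0): u 2 - u 1 = 1
        exact diff_case 1 2 (by decide) (-1) 1 (Or.inr rfl) (Or.inl rfl)
          (by rw [h1, h2, k1, k2]; push_cast; ring)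
      · omega
      · omega
      · -- (-1,-1,-1): |u 1 + u 2| = 2 - 2/q ≥ 1
        refine ⟨(1:ℝ) • stdBasis 4 1 + (1:ℝ) • stdBasis 4 2,
          pair_mem_typeF 1 2 (by decide) 1 1 (Or.inl rfl) (Or.inl rfl), ?_⟩
        rw [inner_pair, h1, h2, k1, k2]
        push_cast
        have : (1:ℝ) * ((q:ℝ)⁻¹ + -1) + 1 * ((q:ℝ)⁻¹ + -1) = -(2 - 2*(q:ℝ)⁻¹) := by ring
        rw [this, abs_neg, abs_of_nonneg (by linarith)]
        linarith
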